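/- Let (m_k)_{k≥0} be a real sequence with m_0 = 1 and let (a_k) and (W_n) be as in the context. Then for every n ≥ 0 the Wick polynomial W_n satisfies n·W_n(x) − Σ_{k=1}^n ((k·x·m_{k−1} − n·m_k)/k!)·W_n^{(k)}(x) = 0, as an identity in ℝ[x], where W_n^{(k)} denotes the k-th formal derivative. -/

import Mathlib

open Polynomial Finset

lemma H2 (u s k : ℕ) (hk : k ≤ s) :
    (((u+1+k).choose k : ℝ)) * (((u+1+s).choose (s-k) : ℝ)) =
      (((u+1+s).choose s : ℝ)) * ((s.choose k : ℝ)) := by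
  rw [Nat.cast_choose ℝ (by omega : k ≤ u+1+k),
      Nat.cast_choose ℝ (by omega : s - k ≤ u+1+s),
      Nat.cast_choose ℝ (by omega : s ≤ u+1+s),
      Nat.cast_choose ℝ hk]
  rw [show u + 1 + k - k = u + 1 from by omega,
      show u + 1 + s - (s - k) = u + 1 + k from by omega,
      show u + 1 + s - s = u + 1 from by omega]
  have := fun j : ℕ => Nat.factorial_pos j
  field_simp

lemma H1 (u s i : ℕ) (hi : i ≤ s) :
    ((i+1 : ℕ) : ℝ) * (((u+i+1).choose (i+1) : ℝ)) * (((u+1+s).choose (s-i) : ℝ)) =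
      ((u+1 : ℕ) : ℝ) * (((u+1+s).choose s : ℝ)) * ((s.choose i : ℝ)) := by
  rw [Nat.cast_choose ℝ (by omega : i+1 ≤ u+i+1),
      Nat.cast_choose ℝ (by omega : s - i ≤ u+1+s),
      Nat.cast_choose ℝ (by omega : s ≤ u+1+s),
      Nat.cast_choose ℝ hi]
  rw [show u + i + 1 - (i+1) = u from by omega,
      show u + 1 + s - (s - i) = u + 1 + i from by omega,
      show u + 1 + s - s = u + 1 from by omega,
      show u+i+1 = u+1+i from by omega]
  have h5 : ((i+1).factorial : ℝ) = (i+1) * (i.factorial) := by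
    rw [Nat.factorial_succ]; push_cast; ring
  have h6 : ((u+1).factorial : ℝ) = (u+1) * (u.factorial) := by
    rw [Nat.factorial_succ]; push_cast; ring
  rw [h5, h6]
  have := fun j : ℕ => Nat.factorial_pos j
  push_cast
  field_simp

/-- With `(a k)` defined from `(m k)` by `a 0 = 1` and
`∑_{k≤n} (n choose k) m k a (n-k) = 0` for `n ≥ 1`, the Wick polynomials
`W n = ∑_{k≤n} (n choose k) a k x^(n-k)` satisfy
`n·W n - ∑_{k=1}^n ((k·x·m (k-1) - n·m k)/k!)·W n^(k) = 0`,
where `W n^(k)` is the `k`-th formal derivative. -/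
theorem stmt_10 (m : ℕ → ℝ) (hm0 : m 0 = 1)
    (a : ℕ → ℝ) (ha0 : a 0 = 1)
    (ha : ∀ n : ℕ, 1 ≤ n →
      ∑ k ∈ Finset.range (n + 1), (n.choose k : ℝ) * m k * a (n - k) = 0)
    (W : ℕ → Polynomial ℝ)
    (hW : ∀ n, W n =
      ∑ k ∈ Finset.range (n + 1),
        Polynomial.C ((n.choose k : ℝ) * a k) * Polynomial.X ^ (n - k)) :
    ∀ n : ℕ,
      Polynomial.C (n : ℝ) * W n -
        ∑ k ∈ Finset.Icc 1 n,
          (Polynomial.C ((k : ℝ) * m (k - 1)) * Polynomial.X -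
              Polynomial.C ((n : ℝ) * m k)) *
            Polynomial.C (1 / (k.factorial : ℝ)) *
            (Polynomial.derivative^[k] (W n)) = 0 := by
  intro n
  -- coefficient of W n
  have hc : ∀ t, (W n).coeff t =
      if t ≤ n then (n.choose (n-t) : ℝ) * a (n-t) else 0 := by
    intro t
    rw [hW n, Polynomial.finset_sum_coeff]
    simp only [Polynomial.coeff_C_mul, Polynomial.coeff_X_pow]
    split_ifs with h
    · rw [Finset.sum_eq_single (n - t)]
      · rw [if_pos (by omega), mul_one]
      · intro j hj hjne
        rw [if_neg, mul_zero]
        simp only [Finset.mem_range] at hj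
        omega
      · intro h'
        exact absurd (Finset.mem_range.2 (by omega)) h'
    · apply Finset.sum_eq_zero
      intro j hj
      simp only [Finset.mem_range] at hj
      rw [if_neg (by omega), mul_zero]
  have hd : ∀ k t, (Polynomial.derivative^[k] (W n)).coeff t =
      ((t+k).descFactorial k : ℝ) * (W n).coeff (t+k) := by
    intro k t
    rw [Polynomial.coeff_iterate_derivative, nsmul_eq_mul]
  -- rewrite each summand
  have hterm : ∀ (α β γ : ℝ) (q : Polynomial ℝ),
      (Polynomial.C α * Polynomial.X - Polynomial.C β) * Polynomial.C γ * q
        = Polynomial.C (α*γ) * (Polynomial.X * q) - Polynomial.C (β*γ) * q := by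
    intro α β γ q
    simp only [Polynomial.C_mul]
    ring
  rw [sub_eq_zero]
  ext t
  rw [Polynomial.coeff_C_mul, Polynomial.finset_sum_coeff]
  have hs : ∀ k ∈ Finset.Icc 1 n,
      ((Polynomial.C ((k : ℝ) * m (k - 1)) * Polynomial.X -
          Polynomial.C ((n : ℝ) * m k)) *
        Polynomial.C (1 / (k.factorial : ℝ)) *
        (Polynomial.derivative^[k] (W n))).coeff t
      = ((k:ℝ) * m (k-1) * (1/(k.factorial:ℝ))) *
          (Polynomial.X * Polynomial.derivative^[k] (W n)).coeff t
        - ((n:ℝ) * m k * (1/(k.factorial:ℝ))) *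
          (Polynomial.derivative^[k] (W n)).coeff t := by
    intro k _
    rw [hterm, Polynomial.coeff_sub, Polynomial.coeff_C_mul, Polynomial.coeff_C_mul]
  rw [Finset.sum_congr rfl hs, Finset.sum_sub_distrib]
  rcases t with _ | u
  · -- t = 0
    have hA : ∑ k ∈ Finset.Icc 1 n,
        ((k:ℝ) * m (k-1) * (1/(k.factorial:ℝ))) *
          (Polynomial.X * Polynomial.derivative^[k] (W n)).coeff 0 = 0 := by
      apply Finset.sum_eq_zero
      intro k _
      rw [Polynomial.coeff_X_mul_zero, mul_zero]
    rw [hA]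
    have hB : ∀ k ∈ Finset.Icc 1 n,
        ((n:ℝ) * m k * (1/(k.factorial:ℝ))) *
          (Polynomial.derivative^[k] (W n)).coeff 0
        = (n:ℝ) * ((n.choose k : ℝ) * m k * a (n-k)) := by
      intro k hk
      simp only [Finset.mem_Icc] at hk
      rw [hd, hc, zero_add, if_pos hk.2, Nat.descFactorial_self,
        Nat.choose_symm hk.2]
      have : (k.factorial : ℝ) ≠ 0 := Nat.cast_ne_zero.2 (Nat.factorial_ne_zero k)
      field_simp
    rw [Finset.sum_congr rfl hB, ← Finset.mul_sum]
    rcases Nat.eq_zero_or_pos n with hn | hn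
    · subst hn; simp
    have hsplit : ∑ k ∈ Finset.range (n+1), (n.choose k : ℝ) * m k * a (n-k)
        = (n.choose 0 : ℝ) * m 0 * a (n-0)
          + ∑ k ∈ Finset.Icc 1 n, (n.choose k : ℝ) * m k * a (n-k) := by
      rw [Finset.range_eq_Ico, Finset.sum_eq_sum_Ico_succ_bot (by omega),
        Finset.Ico_add_one_right_eq_Icc]
    have hIcc : ∑ k ∈ Finset.Icc 1 n, (n.choose k : ℝ) * m k * a (n-k) = -a n := by
      have := ha n hn
      rw [hsplit] at this
      simp only [Nat.choose_zero_right, Nat.cast_one, one_mul, hm0, Nat.sub_zero] at this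
      linarith
    rw [hIcc, hc, if_pos (by omega), Nat.sub_zero, Nat.choose_self]
    push_cast
    ring
  · -- t = u + 1
    simp only [Polynomial.coeff_X_mul]
    by_cases hun : u + 1 ≤ n
    · obtain ⟨s, hns⟩ : ∃ s, n = u + 1 + s := ⟨n - (u+1), by omega⟩
      -- A-sum transformation
      have hA : ∀ k ∈ Finset.Icc 1 n,
          ((k:ℝ) * m (k-1) * (1/(k.factorial:ℝ))) *
            (Polynomial.derivative^[k] (W n)).coeff u
          = if k ≤ s+1 then
              ((u:ℝ)+1) * (n.choose s : ℝ) * (s.choose (k-1) : ℝ) *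
                m (k-1) * a (s-(k-1))
            else 0 := by
        intro k hk
        simp only [Finset.mem_Icc] at hk
        obtain ⟨i, rfl⟩ : ∃ i, k = i + 1 := ⟨k-1, by omega⟩
        rw [hd, hc]
        by_cases hi : i ≤ s
        · rw [if_pos (by omega), if_pos (by omega),
            show n - (u + (i+1)) = s - i from by omega,
            Nat.descFactorial_eq_factorial_mul_choose, Nat.add_sub_cancel]
          have key := H1 u s i hi
          rw [show u + (i+1) = u + i + 1 from by omega]
          rw [hns]
          have hfac : (((i+1).factorial : ℕ) : ℝ) ≠ 0 :=
            Nat.cast_ne_zero.2 (Nat.factorial_ne_zero _)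
          push_cast at key ⊢
          field_simp
          linear_combination (m i * a (s - i)) * key
        · rw [if_neg (by omega), if_neg (by omega), mul_zero, mul_zero]
      -- B-sum transformation
      have hB : ∀ k ∈ Finset.Icc 1 n,
          ((n:ℝ) * m k * (1/(k.factorial:ℝ))) *
            (Polynomial.derivative^[k] (W n)).coeff (u+1)
          = if k ≤ s then
              (n:ℝ) * (n.choose s : ℝ) * (s.choose k : ℝ) * m k * a (s-k)
            else 0 := by
        intro k hk
        simp only [Finset.mem_Icc] at hk
        rw [hd, hc]
        by_cases hks : k ≤ s
        · rw [if_pos (by omega), if_pos hks,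
            show n - (u + 1 + k) = s - k from by omega,
            Nat.descFactorial_eq_factorial_mul_choose]
          have key := H2 u s k hks
          rw [show u + 1 + k = u + 1 + k from rfl]
          nth_rewrite 2 [hns]
          nth_rewrite 3 [hns]
          have hfac : ((k.factorial : ℕ) : ℝ) ≠ 0 :=
            Nat.cast_ne_zero.2 (Nat.factorial_ne_zero _)
          push_cast at key ⊢
          field_simp
          linear_combination ((n:ℝ) * m k * a (s - k)) * key
        · rw [if_neg (by omega), if_neg hks, mul_zero, mul_zero]
      rw [Finset.sum_congr rfl hA, Finset.sum_congr rfl hB]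
      -- collapse the A-sum to Icc 1 (s+1)
      have hAsum : ∑ k ∈ Finset.Icc 1 n,
          (if k ≤ s+1 then
              ((u:ℝ)+1) * (n.choose s : ℝ) * (s.choose (k-1) : ℝ) *
                m (k-1) * a (s-(k-1))
            else 0)
          = ∑ i ∈ Finset.range (s+1),
              ((u:ℝ)+1) * (n.choose s : ℝ) * (s.choose i : ℝ) * m i * a (s-i) := by
        rw [← Finset.sum_subset (Finset.Icc_subset_Icc_right (by omega : s+1 ≤ n))]
        · rw [Finset.sum_congr rfl (g := fun k =>
            ((u:ℝ)+1) * (n.choose s : ℝ) * (s.choose (k-1) : ℝ) * m (k-1) * a (s-(k-1)))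
            (fun k hk => by
              simp only [Finset.mem_Icc] at hk
              exact if_pos (by omega))]
          rw [← Finset.Ico_add_one_right_eq_Icc, Finset.sum_Ico_eq_sum_range]
          apply Finset.sum_congr (by norm_num)
          intro i _
          rw [show 1 + i - 1 = i from by omega]
        · intro k hk hk2
          simp only [Finset.mem_Icc] at hk hk2
          exact if_neg (by omega)
      -- collapse the B-sum to Icc 1 s
      have hBsum : ∑ k ∈ Finset.Icc 1 n,
          (if k ≤ s then
              (n:ℝ) * (n.choose s : ℝ) * (s.choose k : ℝ) * m k * a (s-k)
            else 0)
          = ∑ k ∈ Finset.Icc 1 s,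
              (n:ℝ) * (n.choose s : ℝ) * (s.choose k : ℝ) * m k * a (s-k) := by
        rw [← Finset.sum_subset (Finset.Icc_subset_Icc_right (by omega : s ≤ n))]
        · exact Finset.sum_congr rfl (fun k hk => by
            simp only [Finset.mem_Icc] at hk
            exact if_pos hk.2)
        · intro k hk hk2
          simp only [Finset.mem_Icc] at hk hk2
          exact if_neg (by omega)
      rw [hAsum, hBsum, hc, if_pos hun,
        show n - (u+1) = s from by omega]
      have hsplit : ∑ k ∈ Finset.range (s+1), (s.choose k : ℝ) * m k * a (s-k)
          = (s.choose 0 : ℝ) * m 0 * a (s-0)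
            + ∑ k ∈ Finset.Icc 1 s, (s.choose k : ℝ) * m k * a (s-k) := by
        rw [Finset.range_eq_Ico, Finset.sum_eq_sum_Ico_succ_bot (by omega),
          Finset.Ico_add_one_right_eq_Icc]
      rcases Nat.eq_zero_or_pos s with rfl | hs
      · rw [show Finset.Icc 1 0 = (∅ : Finset ℕ) from by simp, Finset.sum_empty,
          sub_zero, show (0:ℕ)+1 = 1 from rfl, Finset.sum_range_one,
          show n = u + 1 from by omega]
        simp [hm0, ha0]
      · have hS := ha s hs
        rw [hsplit] at hS
        simp only [Nat.choose_zero_right, Nat.cast_one, one_mul, hm0,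
          Nat.sub_zero] at hS
        have hIcc : ∑ k ∈ Finset.Icc 1 s, (s.choose k : ℝ) * m k * a (s-k) = -a s := by
          linarith
        have e1 : ∑ i ∈ Finset.range (s+1),
            ((u:ℝ)+1) * (n.choose s : ℝ) * (s.choose i : ℝ) * m i * a (s-i)
            = ((u:ℝ)+1) * (n.choose s : ℝ) *
              ∑ i ∈ Finset.range (s+1), (s.choose i : ℝ) * m i * a (s-i) := by
          rw [Finset.mul_sum]; exact Finset.sum_congr rfl (fun i _ => by ring)
        have e2 : ∑ k ∈ Finset.Icc 1 s,
            (n:ℝ) * (n.choose s : ℝ) * (s.choose k : ℝ) * m k * a (s-k)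
            = (n:ℝ) * (n.choose s : ℝ) *
              ∑ k ∈ Finset.Icc 1 s, (s.choose k : ℝ) * m k * a (s-k) := by
          rw [Finset.mul_sum]; exact Finset.sum_congr rfl (fun k _ => by ring)
        rw [e1, e2, hIcc]
        have hS0 : ∑ i ∈ Finset.range (s+1), (s.choose i : ℝ) * m i * a (s-i) = 0 :=
          ha s hs
        rw [hS0]
        ring
    · -- t > n : everything vanishes
      have hz : ∀ j, n < j → (W n).coeff j = 0 := by
        intro j hj; rw [hc, if_neg (by omega)]
      rw [hc, if_neg (by omega), mul_zero]
      have hZ1 : ∑ k ∈ Finset.Icc 1 n,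
          ((k:ℝ) * m (k-1) * (1/(k.factorial:ℝ))) *
            (Polynomial.derivative^[k] (W n)).coeff u = 0 :=
        Finset.sum_eq_zero (fun k hk => by
          simp only [Finset.mem_Icc] at hk
          rw [hd, hz (u+k) (by omega), mul_zero, mul_zero])
      have hZ2 : ∑ k ∈ Finset.Icc 1 n,
          ((n:ℝ) * m k * (1/(k.factorial:ℝ))) *
            (Polynomial.derivative^[k] (W n)).coeff (u+1) = 0 :=
        Finset.sum_eq_zero (fun k hk => by
          simp only [Finset.mem_Icc] at hk
          rw [hd, hz (u+1+k) (by omega), mul_zero, mul_zero])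
      rw [hZ1, hZ2, sub_zero]
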